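/- Let A be a unital C*-algebra and let α, γ ∈ A satisfy the SU_q(2) relations. For n ∈ ℤ and k, l ∈ ℕ define a_{n,k,l} = αⁿγᵏ(γ*)ˡ if n ≥ 0 and a_{n,k,l} = (α*)^{−n}γᵏ(γ*)ˡ if n < 0. Then the topological closure of the ℂ-linear span of the family {a_{n,k,l} : n ∈ ℤ, k, l ∈ ℕ} equals the topological closure of the star-subalgebra of A generated by {α, γ}. In particular, the span of this family is a unital *-subalgebra dense in the closed *-subalgebra generated by α and γ. -/

import Mathlib

open scoped ComplexConjugate

/-- Elements `α`, `γ` of a unital C*-algebra satisfy the SU_q(2) relations. -/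
def SUq2Rel {A : Type*} [Ring A] [StarRing A] [Module ℂ A] (q : ℂ) (α γ : A) : Prop :=
  star α * α + star γ * γ = 1 ∧
  α * star α + ((‖q‖ : ℂ) ^ 2) • (star γ * γ) = 1 ∧
  α * γ = conj q • (γ * α) ∧
  γ * star γ = star γ * γ

/-- The element `a_{n,k,l}`: `α^n γ^k (γ*)^l` for `n ≥ 0`, `(α*)^{-n} γ^k (γ*)^l` for `n < 0`. -/
noncomputable def aGen {A : Type*} [Ring A] [StarRing A] (α γ : A) (n : ℤ) (k l : ℕ) : A :=
  (if 0 ≤ n then α ^ n.toNat else star α ^ (-n).toNat) * γ ^ k * star γ ^ l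

/-- The linear span of the family `a_{n,k,l}`. -/
noncomputable def aSpan {A : Type*} [Ring A] [StarRing A] [Module ℂ A] (α γ : A) :
    Submodule ℂ A :=
  Submodule.span ℂ (Set.range fun p : ℤ × ℕ × ℕ => aGen α γ p.1 p.2.1 p.2.2)

section Aux

variable {A : Type*} [NormedRing A] [StarRing A] [CStarRing A] [NormedAlgebra ℂ A]
    [StarModule ℂ A]

/-- move a power across a scalar-commutation relation -/
lemma move_pow {x y : A} {s : ℂ} (hxy : y * x = s • (x * y)) (k : ℕ) :
    y ^ k * x = s ^ k • (x * y ^ k) := by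
  induction k with
  | zero => simp
  | succ k ih =>
      calc y ^ (k+1) * x = y ^ k * (y * x) := by rw [pow_succ, mul_assoc]
        _ = s • (y ^ k * x * y) := by rw [hxy, mul_smul_comm, mul_assoc]
        _ = s • (s ^ k • (x * y ^ k * y)) := by rw [ih, smul_mul_assoc]
        _ = s ^ (k+1) • (x * y ^ (k+1)) := by
              rw [smul_smul, pow_succ, mul_assoc, mul_comm s, ← pow_succ, ← pow_succ y]

lemma move_pow_pow {x y : A} {s : ℂ} (hxy : y * x = s • (x * y)) (k m : ℕ) :
    y ^ k * x ^ m = (s ^ k) ^ m • (x ^ m * y ^ k) := by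
  induction m with
  | zero => simp
  | succ m ih =>
      calc y ^ k * x ^ (m+1) = y ^ k * x ^ m * x := by rw [pow_succ, mul_assoc]
        _ = (s ^ k) ^ m • (x ^ m * (y ^ k * x)) := by rw [ih, smul_mul_assoc, mul_assoc]
        _ = (s ^ k) ^ m • (x ^ m * (s ^ k • (x * y ^ k))) := by rw [move_pow hxy]
        _ = (s ^ k) ^ (m+1) • (x ^ (m+1) * y ^ k) := by
              rw [mul_smul_comm, smul_smul, ← mul_assoc, ← pow_succ, ← pow_succ x]

variable {q : ℂ} {α γ : A}

lemma SUq2Rel.q_mul_conj (hq : q ≠ 0) : True := trivial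

namespace SUq2Rel

variable (h : SUq2Rel q α γ) (hq : q ≠ 0)
include h

lemma c_self : γ * star γ = star γ * γ := h.2.2.2

lemma star_alpha_mul : star α * α = 1 - star γ * γ := eq_sub_of_add_eq h.1

lemma alpha_mul_star : α * star α = 1 - (q * conj q) • (star γ * γ) := by
  have : ((‖q‖ : ℂ) ^ 2) = q * conj q := by
    rw [Complex.mul_conj, ← Complex.sq_norm]; push_cast; ring
  rw [← this]
  exact eq_sub_of_add_eq h.2.1

lemma ac : α * γ = conj q • (γ * α) := h.2.2.1

lemma sc_sa : star γ * star α = q • (star α * star γ) := by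
  have := congrArg star h.2.2.1
  simpa [star_smul, mul_comm] using this

/-- the `c = γ*γ` commutes with `γ`. -/
lemma gc : γ * (star γ * γ) = (star γ * γ) * γ := by
  rw [← mul_assoc, h.c_self]

lemma alpha_c : α * (star γ * γ) = (q * conj q) • ((star γ * γ) * α) := by
  set c := star γ * γ with hc
  have e1 : α * (star α * α) = α - α * c := by rw [h.star_alpha_mul, mul_sub, mul_one]
  have e2 : α * star α * α = α - (q * conj q) • (c * α) := by
    rw [h.alpha_mul_star, sub_mul, one_mul, smul_mul_assoc]
  have : α - α * c = α - (q * conj q) • (c * α) := by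
    rw [← e1, ← e2, mul_assoc]
  exact sub_right_injective this

lemma c_star_alpha : (star γ * γ) * star α = (q * conj q) • (star α * (star γ * γ)) := by
  have := congrArg star h.alpha_c
  simpa [star_smul, mul_assoc, mul_comm, mul_left_comm] using this

include hq in
/-- The fifth relation, derived via the C*-identity. -/
lemma rel5 : α * star γ = q • (star γ * α) := by
  have hcq : conj q ≠ 0 := by simpa using hq
  have hQ : q * conj q ≠ 0 := mul_ne_zero hq hcq
  set c : A := star γ * γ with hcdef
  have h1 := h.star_alpha_mul
  have h3 := h.ac
  have h4 := h.c_self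
  have iγα : γ * α = (conj q)⁻¹ • (α * γ) := by
    rw [h3, smul_smul, inv_mul_cancel₀ hcq, one_smul]
  have isa_sc : star α * star γ = q⁻¹ • (star γ * star α) := by
    rw [h.sc_sa, smul_smul, inv_mul_cancel₀ hq, one_smul]
  have isac : star α * c = (q * conj q)⁻¹ • (c * star α) := by
    rw [h.c_star_alpha, smul_smul, inv_mul_cancel₀ hQ, one_smul]
  set x : A := α * star γ - q • (star γ * α) with hxdef
  have t1 : γ * (star α * (α * star γ)) = c - c * c := by
    calc γ * (star α * (α * star γ)) = γ * ((star α * α) * star γ) := by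
          rw [mul_assoc]
      _ = γ * star γ - γ * (c * star γ) := by
          rw [h1, sub_mul, one_mul, mul_sub]
      _ = c - c * c := by
          rw [h4, ← mul_assoc, h.gc, mul_assoc, h4]
  have t2 : γ * (star α * (star γ * α)) = q⁻¹ • (c - c * c) := by
    calc γ * (star α * (star γ * α)) = γ * ((star α * star γ) * α) := by
          rw [mul_assoc]
      _ = q⁻¹ • (γ * (star γ * (star α * α))) := by
          rw [isa_sc, smul_mul_assoc, mul_smul_comm, mul_assoc]
      _ = q⁻¹ • (c - c * c) := by
          rw [h1, ← mul_assoc, h4, mul_sub, mul_one]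
  have t3 : star α * (γ * (α * star γ)) = (conj q)⁻¹ • (c - c * c) := by
    calc star α * (γ * (α * star γ)) = star α * ((γ * α) * star γ) := by
          rw [mul_assoc]
      _ = (conj q)⁻¹ • (star α * (α * (γ * star γ))) := by
          rw [iγα, smul_mul_assoc, mul_smul_comm, mul_assoc]
      _ = (conj q)⁻¹ • (c - c * c) := by
          rw [h4, ← mul_assoc, ← mul_assoc, h1, sub_mul, one_mul, sub_mul, mul_assoc]
  have t4 : star α * (γ * (star γ * α)) = (q * conj q)⁻¹ • (c - c * c) := by
    calc star α * (γ * (star γ * α)) = (star α * c) * α := by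
          rw [← mul_assoc, ← mul_assoc, mul_assoc (star α) γ (star γ), h4]
      _ = (q * conj q)⁻¹ • (c * (star α * α)) := by
          rw [isac, smul_mul_assoc, mul_assoc]
      _ = (q * conj q)⁻¹ • (c - c * c) := by
          rw [h1, mul_sub, mul_one]
  have key : star x * x = 0 := by
    have hx' : star x = γ * star α - conj q • (star α * γ) := by
      simp [hxdef, star_sub, star_mul, star_smul, sub_eq_add_neg]
    rw [hx', hxdef, sub_mul, mul_sub, mul_sub]
    simp only [smul_mul_assoc, mul_smul_comm, smul_smul, mul_assoc]
    rw [t1, t2, t3, t4]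
    match_scalars <;> field_simp <;> ring
  have hnx : ‖x‖ * ‖x‖ = 0 := by
    rw [← CStarRing.norm_star_mul_self, key, norm_zero]
  have hx0 : x = 0 := by
    have := mul_self_eq_zero.mp hnx
    exact norm_eq_zero.mp this
  have := sub_eq_zero.mp hx0
  exact this

include hq in
lemma rel5' : γ * star α = conj q • (star α * γ) := by
  have := congrArg star (h.rel5 hq)
  simpa [star_smul, mul_comm] using this

include hq in
lemma m1 : γ * α = (conj q)⁻¹ • (α * γ) := by
  rw [h.ac, smul_smul, inv_mul_cancel₀ (by simpa using hq), one_smul]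

include hq in
lemma m2 : star γ * α = q⁻¹ • (α * star γ) := by
  rw [h.rel5 hq, smul_smul, inv_mul_cancel₀ hq, one_smul]

include hq in
lemma m3 : γ * star α = conj q • (star α * γ) := h.rel5' hq

lemma m4 : star γ * star α = q • (star α * star γ) := h.sc_sa

include hq in
lemma moveGGa (k l m : ℕ) : (γ ^ k * star γ ^ l) * α ^ m
    = (((q⁻¹) ^ l) ^ m * (((conj q)⁻¹) ^ k) ^ m) • (α ^ m * (γ ^ k * star γ ^ l)) := by
  rw [mul_assoc, move_pow_pow (h.m2 hq) l m, mul_smul_comm, ← mul_assoc,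
    move_pow_pow (h.m1 hq) k m, smul_mul_assoc, smul_smul, mul_assoc]

include hq in
lemma moveGGsa (k l m : ℕ) : (γ ^ k * star γ ^ l) * star α ^ m
    = ((q ^ l) ^ m * ((conj q) ^ k) ^ m) • (star α ^ m * (γ ^ k * star γ ^ l)) := by
  rw [mul_assoc, move_pow_pow (h.m4) l m, mul_smul_comm, ← mul_assoc,
    move_pow_pow (h.m3 hq) k m, smul_mul_assoc, smul_smul, mul_assoc]

lemma cmγ : Commute γ (star γ) := h.c_self

lemma c_mul_pow (k l : ℕ) : (star γ * γ) * (γ ^ k * star γ ^ l)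
    = γ ^ (k+1) * star γ ^ (l+1) := by
  rw [← h.c_self]
  calc (γ * star γ) * (γ ^ k * star γ ^ l)
      = γ * ((star γ * γ ^ k) * star γ ^ l) := by rw [mul_assoc, mul_assoc]
    _ = γ * ((γ ^ k * star γ) * star γ ^ l) := by rw [(h.cmγ.symm.pow_right k).eq]
    _ = (γ * γ ^ k) * (star γ * star γ ^ l) := by
        rw [← mul_assoc, ← mul_assoc, mul_assoc (γ * γ ^ k)]
    _ = γ ^ (k+1) * star γ ^ (l+1) := by rw [← pow_succ', ← pow_succ']

end SUq2Rel

lemma aGen_mem (α γ : A) (n : ℤ) (k l : ℕ) : aGen α γ n k l ∈ aSpan α γ :=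
  Submodule.subset_span ⟨(n, k, l), rfl⟩

lemma aGen_nonneg (α γ : A) {n : ℤ} (hn : 0 ≤ n) (k l : ℕ) :
    aGen α γ n k l = α ^ n.toNat * γ ^ k * star γ ^ l := by
  rw [aGen, if_pos hn]

lemma aGen_nonpos (α γ : A) {n : ℤ} (hn : n ≤ 0) (k l : ℕ) :
    aGen α γ n k l = star α ^ (-n).toNat * γ ^ k * star γ ^ l := by
  rcases eq_or_lt_of_le hn with hn' | hn'
  · rw [aGen, if_pos (le_of_eq hn'.symm), hn']
    simp
  · rw [aGen, if_neg (not_le.mpr hn')]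

variable {q : ℂ} {α γ : A}

lemma mul_g (h : SUq2Rel q α γ) (n : ℤ) (k l : ℕ) :
    aGen α γ n k l * γ = aGen α γ n (k+1) l := by
  rw [aGen, aGen, mul_assoc, (h.cmγ.symm.pow_left l).eq, ← mul_assoc,
    mul_assoc _ (γ ^ k) γ, ← pow_succ]

lemma mul_sg (n : ℤ) (k l : ℕ) :
    aGen α γ n k l * star γ = aGen α γ n k (l+1) := by
  rw [aGen, aGen, mul_assoc, ← pow_succ]

lemma mul_a (h : SUq2Rel q α γ) (hq : q ≠ 0) (n : ℤ) (k l : ℕ) :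
    aGen α γ n k l * α ∈ aSpan α γ := by
  have e1 := h.moveGGa hq k l 1
  simp only [pow_one] at e1
  rcases le_or_gt 0 n with hn | hn
  · have e : aGen α γ n k l * α = ((q⁻¹)^l * ((conj q)⁻¹)^k) • aGen α γ (n+1) k l := by
      rw [aGen_nonneg α γ hn, aGen_nonneg α γ (by omega : (0:ℤ) ≤ n + 1),
        show ((n+1).toNat) = n.toNat + 1 by omega]
      rw [mul_assoc, mul_assoc, ← mul_assoc (γ ^ k), e1, mul_smul_comm, ← mul_assoc,
        ← pow_succ, ← mul_assoc]
    rw [e]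
    exact Submodule.smul_mem _ _ (aGen_mem α γ _ _ _)
  · have hn1 : n + 1 ≤ 0 := by omega
    have hmm : (-n).toNat = (-(n+1)).toNat + 1 := by omega
    have e : aGen α γ n k l * α = ((q⁻¹)^l * ((conj q)⁻¹)^k) •
        (aGen α γ (n+1) k l - aGen α γ (n+1) (k+1) (l+1)) := by
      rw [aGen_nonpos α γ (le_of_lt hn), aGen_nonpos α γ hn1, aGen_nonpos α γ hn1, hmm]
      rw [mul_assoc, mul_assoc, ← mul_assoc (γ ^ k), e1, mul_smul_comm]
      congr 1
      rw [pow_succ, mul_assoc, ← mul_assoc (star α) α, h.star_alpha_mul, sub_mul, one_mul,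
        mul_sub, h.c_mul_pow k l, ← mul_assoc, ← mul_assoc]
    rw [e]
    exact Submodule.smul_mem _ _
      (Submodule.sub_mem _ (aGen_mem α γ _ _ _) (aGen_mem α γ _ _ _))

lemma mul_sa (h : SUq2Rel q α γ) (hq : q ≠ 0) (n : ℤ) (k l : ℕ) :
    aGen α γ n k l * star α ∈ aSpan α γ := by
  have e1 := h.moveGGsa hq k l 1
  simp only [pow_one] at e1
  rcases le_or_gt n 0 with hn | hn
  · have e : aGen α γ n k l * star α = ((q)^l * ((conj q))^k) • aGen α γ (n-1) k l := by
      rw [aGen_nonpos α γ hn, aGen_nonpos α γ (by omega : n - 1 ≤ 0),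
        show ((-(n-1)).toNat) = (-n).toNat + 1 by omega]
      rw [mul_assoc, mul_assoc, ← mul_assoc (γ ^ k), e1, mul_smul_comm, ← mul_assoc,
        ← pow_succ, ← mul_assoc]
    rw [e]
    exact Submodule.smul_mem _ _ (aGen_mem α γ _ _ _)
  · have hn1 : (0:ℤ) ≤ n - 1 := by omega
    have hmm : n.toNat = (n-1).toNat + 1 := by omega
    have e : aGen α γ n k l * star α = ((q)^l * ((conj q))^k) •
        (aGen α γ (n-1) k l - (q * conj q) • aGen α γ (n-1) (k+1) (l+1)) := by
      rw [aGen_nonneg α γ (le_of_lt hn), aGen_nonneg α γ hn1, aGen_nonneg α γ hn1, hmm]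
      rw [mul_assoc, mul_assoc, ← mul_assoc (γ ^ k), e1, mul_smul_comm]
      congr 1
      rw [pow_succ, mul_assoc, ← mul_assoc α (star α), h.alpha_mul_star, sub_mul, one_mul,
        mul_sub, smul_mul_assoc, h.c_mul_pow k l, mul_smul_comm,
        ← mul_assoc, ← mul_assoc]
    rw [e]
    exact Submodule.smul_mem _ _
      (Submodule.sub_mem _ (aGen_mem α γ _ _ _)
        (Submodule.smul_mem _ _ (aGen_mem α γ _ _ _)))

lemma star_aGen (h : SUq2Rel q α γ) (hq : q ≠ 0) (n : ℤ) (k l : ℕ) :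
    ∃ s : ℂ, star (aGen α γ n k l) = s • aGen α γ (-n) l k := by
  rcases le_or_gt 0 n with hn | hn
  · refine ⟨(q ^ k) ^ n.toNat * ((conj q) ^ l) ^ n.toNat, ?_⟩
    rw [aGen_nonneg α γ hn, aGen_nonpos α γ (by omega : -n ≤ 0), neg_neg]
    simp only [star_mul, star_pow, star_star]
    rw [← mul_assoc, h.moveGGsa hq l k n.toNat, ← mul_assoc]
  · refine ⟨((q⁻¹) ^ k) ^ (-n).toNat * (((conj q)⁻¹) ^ l) ^ (-n).toNat, ?_⟩
    rw [aGen_nonpos α γ (le_of_lt hn), aGen_nonneg α γ (by omega : (0:ℤ) ≤ -n)]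
    simp only [star_mul, star_pow, star_star]
    rw [← mul_assoc, h.moveGGa hq l k (-n).toNat, ← mul_assoc]

end Aux

theorem stmt1 (q : ℂ) (hq0 : 0 < ‖q‖) (hq1 : ‖q‖ < 1)
    {A : Type*} [NormedRing A] [StarRing A] [CStarRing A] [NormedAlgebra ℂ A]
    [StarModule ℂ A] [CompleteSpace A]
    (α γ : A) (h : SUq2Rel q α γ) :
    closure ((aSpan α γ : Submodule ℂ A) : Set A)
        = closure ((StarAlgebra.adjoin ℂ {α, γ} : StarSubalgebra ℂ A) : Set A) ∧
      (1 : A) ∈ aSpan α γ ∧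
      (∀ x ∈ aSpan α γ, ∀ y ∈ aSpan α γ, x * y ∈ aSpan α γ) ∧
      (∀ x ∈ aSpan α γ, star x ∈ aSpan α γ) := by
  have hq : q ≠ 0 := by simpa using hq0.ne'
  set S := aSpan α γ with hS
  -- basic memberships
  have h1S : (1 : A) ∈ S := by
    have : aGen α γ 0 0 0 = 1 := by simp [aGen]
    exact this ▸ aGen_mem α γ 0 0 0
  have hαS : α ∈ S := by
    have : aGen α γ 1 0 0 = α := by simp [aGen]
    exact this ▸ aGen_mem α γ 1 0 0
  have hγS : γ ∈ S := by
    have : aGen α γ 0 1 0 = γ := by simp [aGen]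
    exact this ▸ aGen_mem α γ 0 1 0
  -- right multiplication by atoms
  have hR : ∀ z : A, (∀ n k l, aGen α γ n k l * z ∈ S) → ∀ x ∈ S, x * z ∈ S := by
    intro z hz x hx
    induction hx using Submodule.span_induction with
    | mem x hx => obtain ⟨⟨n, k, l⟩, rfl⟩ := hx; exact hz n k l
    | zero => rw [zero_mul]; exact Submodule.zero_mem _
    | add x y _ _ ihx ihy => rw [add_mul]; exact Submodule.add_mem _ ihx ihy
    | smul a x _ ih => rw [smul_mul_assoc]; exact Submodule.smul_mem _ _ ih
  have mulγ : ∀ x ∈ S, x * γ ∈ S :=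
    hR γ (fun n k l => (mul_g h n k l) ▸ aGen_mem α γ n (k+1) l)
  have mulsγ : ∀ x ∈ S, x * star γ ∈ S :=
    hR (star γ) (fun n k l => by rw [mul_sg]; exact aGen_mem α γ n k (l+1))
  have mulα : ∀ x ∈ S, x * α ∈ S := hR α (mul_a h hq)
  have mulsα : ∀ x ∈ S, x * star α ∈ S := hR (star α) (mul_sa h hq)
  -- right multiplication by powers of atoms
  have powlem : ∀ w : A, (∀ x ∈ S, x * w ∈ S) → ∀ x ∈ S, ∀ p : ℕ, x * w ^ p ∈ S := by
    intro w hw x hx p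
    induction p with
    | zero => simpa using hx
    | succ p ih => rw [pow_succ, ← mul_assoc]; exact hw _ ih
  -- right multiplication by generators
  have mulGen : ∀ x ∈ S, ∀ n k l, x * aGen α γ n k l ∈ S := by
    intro x hx n k l
    rw [aGen, ← mul_assoc, ← mul_assoc]
    refine powlem _ mulsγ _ ?_ l
    refine powlem _ mulγ _ ?_ k
    split_ifs with hn
    · exact powlem _ mulα _ hx _
    · exact powlem _ mulsα _ hx _
  -- multiplicative closure
  have hmul : ∀ x ∈ S, ∀ y ∈ S, x * y ∈ S := by
    intro x hx y hy
    induction hy using Submodule.span_induction with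
    | mem y hy => obtain ⟨⟨n, k, l⟩, rfl⟩ := hy; exact mulGen x hx n k l
    | zero => rw [mul_zero]; exact Submodule.zero_mem _
    | add y z _ _ ihy ihz => rw [mul_add]; exact Submodule.add_mem _ ihy ihz
    | smul a y _ ih => rw [mul_smul_comm]; exact Submodule.smul_mem _ _ ih
  -- star closure
  have hstar : ∀ x ∈ S, star x ∈ S := by
    intro x hx
    induction hx using Submodule.span_induction with
    | mem x hx =>
        obtain ⟨⟨n, k, l⟩, rfl⟩ := hx
        obtain ⟨s, hs⟩ := star_aGen h hq n k l
        rw [hs]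
        exact Submodule.smul_mem _ _ (aGen_mem α γ _ _ _)
    | zero => rw [star_zero]; exact Submodule.zero_mem _
    | add x y _ _ ihx ihy => rw [star_add]; exact Submodule.add_mem _ ihx ihy
    | smul a x _ ih => rw [star_smul]; exact Submodule.smul_mem _ _ ih
  -- the closure equality
  refine ⟨?_, h1S, hmul, hstar⟩
  have hadj : StarAlgebra.adjoin ℂ ({α, γ} : Set A) ≤
      StarSubalgebra.mk (S.toSubalgebra h1S (fun x y hx hy => hmul x hx y hy))
        (fun {x} hx => hstar x hx) := by
    apply StarAlgebra.adjoin_le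
    rintro z (rfl | rfl)
    · exact hαS
    · exact hγS
  have hsub2 : ((StarAlgebra.adjoin ℂ ({α, γ} : Set A) : StarSubalgebra ℂ A) : Set A)
      ⊆ (S : Set A) := fun z hz => hadj hz
  have hsub1 : (S : Set A) ⊆
      ((StarAlgebra.adjoin ℂ ({α, γ} : Set A) : StarSubalgebra ℂ A) : Set A) := by
    have hα : α ∈ StarAlgebra.adjoin ℂ ({α, γ} : Set A) :=
      StarAlgebra.subset_adjoin ℂ _ (Or.inl rfl)
    have hγ : γ ∈ StarAlgebra.adjoin ℂ ({α, γ} : Set A) :=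
      StarAlgebra.subset_adjoin ℂ _ (Or.inr rfl)
    have hle : S ≤ Subalgebra.toSubmodule (StarAlgebra.adjoin ℂ ({α, γ} : Set A)).toSubalgebra := by
      rw [hS, aSpan]
      apply Submodule.span_le.mpr
      rintro _ ⟨⟨n, k, l⟩, rfl⟩
      show aGen α γ n k l ∈ StarAlgebra.adjoin ℂ ({α, γ} : Set A)
      rw [aGen]
      refine mul_mem (mul_mem ?_ (pow_mem hγ k)) (pow_mem (star_mem hγ) l)
      split_ifs with hn
      · exact pow_mem hα _
      · exact pow_mem (star_mem hα) _
    exact fun z hz => hle hz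
  rw [Set.Subset.antisymm hsub1 hsub2]
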